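/- Let G be a nontrivial finite nilpotent group with π(G) = {p1, ..., pk}, and for each j let P_j be a Sylow p_j-subgroup of G of rank r_j. Then ι(G) = r_1 + r_2 + ... + r_k. -/

import Mathlib

/-- The intersection number of a group: the minimum number of maximal subgroups
whose intersection equals the Frattini subgroup. -/
noncomputable def interNum (G : Type*) [Group G] : ℕ :=
  sInf {n | ∃ s : Finset (Subgroup G), s.card = n ∧ (∀ M ∈ s, IsCoatom M) ∧
    s.inf id = frattini G}

open Subgroup

section Aux

variable {G : Type*} [Group G]

/-- A subgroup of prime index is a maximal subgroup. -/
lemma aux_isCoatom_of_index_prime {H : Subgroup G} (h : H.index.Prime) : IsCoatom H := by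
  constructor
  · intro htop
    rw [htop, index_top] at h
    exact h.ne_one rfl
  · intro K hK
    have hdvd : K.index ∣ H.index := index_dvd_of_le hK.le
    rcases (Nat.dvd_prime h).mp hdvd with h1 | h2
    · exact index_eq_one.mp h1
    · exfalso
      have hmul := relIndex_mul_index hK.le
      rw [h2] at hmul
      have hrel : H.relIndex K = 1 :=
        mul_right_cancel₀ h.ne_zero (hmul.trans (one_mul H.index).symm)
      exact hK.ne' (le_antisymm hK.le (relIndex_eq_one.mp hrel)).symm

/-- In a finite group, a normal maximal subgroup has prime index. -/
lemma aux_index_prime_of_isCoatom [Finite G] {M : Subgroup G} (hM : IsCoatom M)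
    (hn : M.Normal) : M.index.Prime := by
  have hsub : ∀ L : Subgroup (G ⧸ M), L = ⊥ ∨ L = ⊤ := by
    intro L
    have hker : (QuotientGroup.mk' M).ker = M := QuotientGroup.ker_mk' M
    have hle : M ≤ L.comap (QuotientGroup.mk' M) := by
      intro m hm
      have h9 : QuotientGroup.mk' M m = 1 := (QuotientGroup.eq_one_iff m).mpr hm
      rw [Subgroup.mem_comap, h9]
      exact L.one_mem
    rcases hle.lt_or_eq with hlt | heq
    · right
      have h1 := hM.2 _ hlt
      have h2 := congrArg (Subgroup.map (QuotientGroup.mk' M)) h1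
      rwa [map_comap_eq_self_of_surjective (QuotientGroup.mk'_surjective M),
        map_top_of_surjective _ (QuotientGroup.mk'_surjective M)] at h2
    · left
      have h2 : L.comap (QuotientGroup.mk' M) = (⊥ : Subgroup (G ⧸ M)).comap
          (QuotientGroup.mk' M) := by
        rw [MonoidHom.comap_bot, hker, ← heq]
      exact comap_injective (QuotientGroup.mk'_surjective M) h2
  have hcard : M.index = Nat.card (G ⧸ M) := rfl
  have hne1 : Nat.card (G ⧸ M) ≠ 1 := by
    rw [← hcard]
    exact fun h => hM.1 (index_eq_one.mp h)
  set p := (Nat.card (G ⧸ M)).minFac with hp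
  have hpp : p.Prime := Nat.minFac_prime hne1
  haveI : Fact p.Prime := ⟨hpp⟩
  haveI : Fintype (G ⧸ M) := Fintype.ofFinite _
  obtain ⟨g, hg⟩ := exists_prime_orderOf_dvd_card (G := G ⧸ M) p
    (by rw [← Nat.card_eq_fintype_card]; exact Nat.minFac_dvd _)
  have hzb : Subgroup.zpowers g ≠ ⊥ := by
    intro hb
    have hg1 : g = 1 := by
      have := hb ▸ Subgroup.mem_zpowers g
      simpa [Subgroup.mem_bot] using this
    rw [hg1, orderOf_one] at hg
    exact hpp.ne_one hg.symm
  have hzt : Subgroup.zpowers g = ⊤ := (hsub _).resolve_left hzb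
  have hcard2 : Nat.card (G ⧸ M) = p := by
    rw [← hg, ← Nat.card_zpowers, hzt]
    exact (Nat.card_congr Subgroup.topEquiv.toEquiv).symm
  rw [hcard, hcard2]
  exact hpp

/-- The trivial subgroup of a group of prime order is a maximal subgroup. -/
lemma aux_isCoatom_bot_of_prime_card {K : Type*} [Group K] {p : ℕ} (hp : p.Prime)
    (hcard : Nat.card K = p) : IsCoatom (⊥ : Subgroup K) := by
  haveI : Fact (Nat.card K).Prime := ⟨hcard ▸ hp⟩
  haveI : Finite K := Nat.finite_of_card_ne_zero (by rw [hcard]; exact hp.ne_zero)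
  haveI : Nontrivial K := by
    rw [← Finite.one_lt_card_iff_nontrivial, hcard]
    exact hp.one_lt
  refine ⟨bot_ne_top, fun L hL => ?_⟩
  rcases L.eq_bot_or_eq_top_of_prime_card with h | h
  · exact absurd h hL.ne'
  · exact h

lemma aux_orderIso_finset_inf {α β ι : Type*} [Lattice α] [OrderTop α] [Lattice β]
    [OrderTop β] (f : α ≃o β) (s : Finset ι) (g : ι → α) :
    f (s.inf g) = s.inf (fun i => f (g i)) := by
  classical
  induction s using Finset.induction with
  | empty => simp
  | insert _ _ h ih => rw [Finset.inf_insert, Finset.inf_insert, OrderIso.map_inf, ih]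

lemma aux_interNum_key {A B : Type*} [Group A] [Group B] (e : A ≃* B) (n : ℕ) :
      (∃ s : Finset (Subgroup A), s.card = n ∧ (∀ M ∈ s, IsCoatom M) ∧
        s.inf id = frattini A) →
      (∃ s : Finset (Subgroup B), s.card = n ∧ (∀ M ∈ s, IsCoatom M) ∧
        s.inf id = frattini B) := by
    rintro ⟨s, hcard, hco, hinf⟩
    classical
    refine ⟨s.image (fun M => M.map e.toMonoidHom), ?_, ?_, ?_⟩
    · rw [Finset.card_image_of_injective _ (fun M N h => ?_), hcard]
      have h2 := congrArg (Subgroup.comap e.toMonoidHom) h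
      rwa [comap_map_eq_self_of_injective e.injective,
        comap_map_eq_self_of_injective e.injective] at h2
    · intro M hM
      obtain ⟨N, hN, rfl⟩ := Finset.mem_image.mp hM
      exact (OrderIso.isCoatom_iff e.mapSubgroup N).mpr (hco N hN)
    · rw [Finset.inf_image]
      have h1 : ((fun M : Subgroup A => (id M).map e.toMonoidHom))
          = fun M : Subgroup A => e.mapSubgroup (id M) := rfl
      calc s.inf (id ∘ fun M => M.map e.toMonoidHom)
          = s.inf (fun M => e.mapSubgroup (id M)) := rfl
        _ = e.mapSubgroup (s.inf id) := (aux_orderIso_finset_inf e.mapSubgroup s id).symm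
        _ = frattini B := by
            rw [hinf]
            exact e.mapSubgroup.map_radical
/-- The intersection number is invariant under isomorphism. -/
lemma aux_interNum_eq_of_mulEquiv {G' : Type*} [Group G'] (e : G ≃* G') :
    interNum G = interNum G' := by
  unfold interNum
  congr 1
  ext n
  simp only [Set.mem_setOf_eq]
  exact ⟨aux_interNum_key e n, aux_interNum_key e.symm n⟩

end Aux

section Master

variable {I : Type*} [Fintype I] [DecidableEq I] {H : I → Type*} [∀ i, Group (H i)]
  [∀ i, Finite (H i)] {q : I → ℕ} {n : I → ℕ}

/-- In a finite nilpotent product, the Frattini subgroup is the intersection of the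
pullbacks of the component Frattini subgroups. -/
lemma aux_frattini_pi (hnil : Group.IsNilpotent (∀ i, H i)) :
    frattini (∀ i, H i) = ⨅ i, Subgroup.comap (Pi.evalMonoidHom H i) (frattini (H i)) := by
  apply le_antisymm
  · exact le_iInf fun i =>
      frattini_le_comap_frattini_of_surjective (Function.surjective_eval i)
  · intro x hx
    simp only [Subgroup.mem_iInf, Subgroup.mem_comap] at hx
    have hx' : ∀ i, x i ∈ frattini (H i) := hx
    have hmem : ∀ M : Subgroup (∀ i, H i), IsCoatom M → x ∈ M := by
      intro M hM
      haveI hMn : M.Normal :=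
        NormalizerCondition.normal_of_coatom M (normalizerCondition_of_isNilpotent) hM
      have ht : M.index.Prime := aux_index_prime_of_isCoatom hM hMn
      have hsingle : ∀ i, Pi.mulSingle i (x i) ∈ M := by
        intro i
        set ρ : H i →* (∀ j, H j) ⧸ M :=
          (QuotientGroup.mk' M).comp (MonoidHom.mulSingle H i) with hρ
        have hdvd : Nat.card ρ.range ∣ M.index := by
          have h0 : M.index = Nat.card ((∀ j, H j) ⧸ M) := rfl
          rw [h0]
          exact Subgroup.card_subgroup_dvd_card ρ.range
        have hρx : ρ (x i) = QuotientGroup.mk' M (Pi.mulSingle i (x i)) := rfl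
        rcases (Nat.dvd_prime ht).mp hdvd with h1 | h2
        · have hbot : ρ.range = ⊥ := Subgroup.card_eq_one.mp h1
          have h3 : ρ (x i) = 1 := by
            have h4 : ρ (x i) ∈ ρ.range := ⟨x i, rfl⟩
            rwa [hbot, Subgroup.mem_bot] at h4
          rw [hρx] at h3
          exact (QuotientGroup.eq_one_iff _).mp h3
        · have hkerco : IsCoatom ρ.ker := by
            apply aux_isCoatom_of_index_prime
            rw [Subgroup.index_ker, h2]
            exact ht
          have h3 : x i ∈ ρ.ker := frattini_le_coatom hkerco (hx' i)
          have h4 : ρ (x i) = 1 := h3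
          rw [hρx] at h4
          exact (QuotientGroup.eq_one_iff _).mp h4
      have hx_eq := Finset.noncommProd_mulSingle x
      rw [← hx_eq]
      exact Subgroup.noncommProd_mem M _ fun i _ => hsingle i
    show x ∈ frattini (∀ i, H i)
    rw [show frattini (∀ i, H i)
        = ⨅ M ∈ {M : Subgroup (∀ i, H i) | IsCoatom M}, M from rfl]
    simp only [Subgroup.mem_iInf, Set.mem_setOf_eq]
    exact fun M hM => hmem M hM

lemma aux_master (hq : ∀ i, (q i).Prime) (hqinj : Function.Injective q)
    (f : ∀ i, H i →* (Fin (n i) → Multiplicative (ZMod (q i))))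
    (hf : ∀ i, Function.Surjective (f i))
    (hker : ∀ i, (f i).ker = frattini (H i))
    (hnil : Group.IsNilpotent (∀ i, H i)) :
    interNum (∀ i, H i) = ∑ i, n i := by
  classical
  -- the coordinate homomorphisms
  set c : ∀ i, Fin (n i) → ((∀ j, H j) →* Multiplicative (ZMod (q i))) :=
    fun i j => (Pi.evalMonoidHom (fun _ => Multiplicative (ZMod (q i))) j).comp
      ((f i).comp (Pi.evalMonoidHom H i)) with hc
  have hcsurj : ∀ i j, Function.Surjective (c i j) :=
    fun i j => (Function.surjective_eval j).comp ((hf i).comp (Function.surjective_eval i))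
  have hcard_zmod : ∀ i, Nat.card (Multiplicative (ZMod (q i))) = q i := by
    intro i
    rw [Nat.card_congr (Multiplicative.ofAdd (α := ZMod (q i))).symm]
    exact Nat.card_zmod (q i)
  have hco : ∀ i j, IsCoatom ((c i j).ker) := by
    intro i j
    have h0 : (c i j).ker = Subgroup.comap (c i j) ⊥ := by
      rw [MonoidHom.comap_bot]
    rw [h0]
    exact isCoatom_comap_of_surjective (hcsurj i j)
      (aux_isCoatom_bot_of_prime_card (hq i) (hcard_zmod i))
  have SI := aux_frattini_pi (H := H) hnil
  -- membership of the candidate family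
  have hmem : (∑ i, n i) ∈ {m | ∃ s : Finset (Subgroup (∀ i, H i)), s.card = m ∧
      (∀ M ∈ s, IsCoatom M) ∧ s.inf id = frattini (∀ i, H i)} := by
    refine ⟨(Finset.univ : Finset (Σ i, Fin (n i))).image (fun ij => (c ij.1 ij.2).ker),
      ?_, ?_, ?_⟩
    · rw [Finset.card_image_of_injective, Finset.card_univ, Fintype.card_sigma]
      · simp
      · -- injectivity of the kernel family
        rintro ⟨i, j⟩ ⟨i', j'⟩ hk
        by_contra hne
        obtain ⟨g, hg⟩ : ∃ g : Multiplicative (ZMod (q i)), g ≠ 1 := by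
          haveI : Finite (Multiplicative (ZMod (q i))) :=
            Nat.finite_of_card_ne_zero (by rw [hcard_zmod i]; exact (hq i).ne_zero)
          haveI hnt : Nontrivial (Multiplicative (ZMod (q i))) := by
            rw [← Finite.one_lt_card_iff_nontrivial, hcard_zmod i]
            exact (hq i).one_lt
          exact exists_ne 1
        obtain ⟨z, hz⟩ := hf i (Pi.mulSingle j g)
        have hw_not : Pi.mulSingle i z ∉ (c i j).ker := by
          simp only [MonoidHom.mem_ker, hc, MonoidHom.coe_comp, Function.comp_apply,
            Pi.evalMonoidHom_apply, Pi.mulSingle_eq_same, hz]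
          exact hg
        have hw_in : Pi.mulSingle i z ∈ (c i' j').ker := by
          simp only [MonoidHom.mem_ker, hc, MonoidHom.coe_comp, Function.comp_apply,
            Pi.evalMonoidHom_apply]
          by_cases hii : i = i'
          · subst hii
            have hjj : j ≠ j' := fun hj => hne (by rw [hj])
            rw [Pi.mulSingle_eq_same, hz, Pi.mulSingle_eq_of_ne (Ne.symm hjj)]
          · rw [Pi.mulSingle_eq_of_ne (Ne.symm hii)]
            simp
        have hk' : (c i j).ker = (c i' j').ker := hk
        rw [hk'] at hw_not
        exact hw_not hw_in
    · intro M hM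
      obtain ⟨ij, _, rfl⟩ := Finset.mem_image.mp hM
      exact hco ij.1 ij.2
    · rw [Finset.inf_image]
      apply le_antisymm
      · intro x hx
        have hx' : ∀ i j, x ∈ (c i j).ker := by
          intro i j
          have hle := Finset.inf_le (f := fun ij : Σ i, Fin (n i) => id ((c ij.1 ij.2).ker))
            (Finset.mem_univ (⟨i, j⟩ : Σ i, Fin (n i)))
          exact hle hx
        rw [SI]
        simp only [Subgroup.mem_iInf, Subgroup.mem_comap]
        intro i
        rw [← hker i, MonoidHom.mem_ker]
        funext j
        have h5 := hx' i j
        simpa [hc, MonoidHom.mem_ker] using h5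
      · apply Finset.le_inf
        intro ij _
        exact frattini_le_coatom (hco ij.1 ij.2)
  -- lower bound
  have hlb : ∀ m, (∃ s : Finset (Subgroup (∀ i, H i)), s.card = m ∧
      (∀ M ∈ s, IsCoatom M) ∧ s.inf id = frattini (∀ i, H i)) → ∑ i, n i ≤ m := by
    rintro m ⟨s, hcard, hcoat, hinf⟩
    have hidx_prime : ∀ M ∈ s, (Subgroup.index M).Prime := by
      intro M hM
      haveI : M.Normal := NormalizerCondition.normal_of_coatom M
        (normalizerCondition_of_isNilpotent) (hcoat M hM)
      exact aux_index_prime_of_isCoatom (hcoat M hM) this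
    haveI hnorm : ∀ M : {x // x ∈ s}, (M.1).Normal := fun M =>
      NormalizerCondition.normal_of_coatom M.1 (normalizerCondition_of_isNilpotent)
        (hcoat M.1 M.2)
    set Θ : (∀ i, H i) →* ∀ M : {x // x ∈ s}, (∀ i, H i) ⧸ (M.1 : Subgroup (∀ i, H i)) :=
      Pi.monoidHom (fun M => QuotientGroup.mk' M.1) with hΘ
    have hkerΘ : Θ.ker = frattini (∀ i, H i) := by
      rw [← hinf, Finset.inf_id_eq_sInf]
      ext x
      simp only [MonoidHom.mem_ker, hΘ, Subgroup.mem_sInf, Finset.mem_coe]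
      constructor
      · intro hx M hM
        haveI : M.Normal := hnorm ⟨M, hM⟩
        have h1 : QuotientGroup.mk' M x = 1 := congrFun hx ⟨M, hM⟩
        exact (QuotientGroup.eq_one_iff x).mp h1
      · intro hx
        funext M
        exact (QuotientGroup.eq_one_iff x).mpr (hx M.1 M.2)
    have h1 : Nat.card ((∀ i, H i) ⧸ frattini (∀ i, H i)) ∣ ∏ M ∈ s, M.index := by
      rw [← hkerΘ,
        Nat.card_congr (QuotientGroup.quotientKerEquivRange Θ).toEquiv]
      refine (Subgroup.card_subgroup_dvd_card Θ.range).trans ?_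
      rw [Nat.card_pi]
      exact dvd_of_eq (Finset.prod_coe_sort s (fun M => M.index))
    -- computing the cardinality of the Frattini quotient
    set Ψ : (∀ i, H i) →* ∀ i, (Fin (n i) → Multiplicative (ZMod (q i))) :=
      Pi.monoidHom (fun i => (f i).comp (Pi.evalMonoidHom H i)) with hΨ
    have hΨsurj : Function.Surjective Ψ := by
      intro w
      choose x hx using fun i => hf i (w i)
      exact ⟨fun i => x i, funext fun i => hx i⟩
    have hkerΨ : Ψ.ker = frattini (∀ i, H i) := by
      rw [SI]
      ext x
      simp only [MonoidHom.mem_ker, hΨ, Subgroup.mem_iInf, Subgroup.mem_comap]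
      constructor
      · intro hx i
        rw [← hker i, MonoidHom.mem_ker]
        exact congrFun hx i
      · intro hx
        funext i
        have h2 := hx i
        rw [← hker i, MonoidHom.mem_ker] at h2
        exact h2
    have hq2 : Nat.card ((∀ i, H i) ⧸ frattini (∀ i, H i)) = ∏ i, (q i) ^ (n i) := by
      rw [← hkerΨ, Nat.card_congr (QuotientGroup.quotientKerEquivRange Ψ).toEquiv,
        Ψ.range_eq_top_of_surjective hΨsurj]
      rw [Nat.card_congr Subgroup.topEquiv.toEquiv, Nat.card_pi]
      congr 1
      funext i
      rw [Nat.card_fun, hcard_zmod i, Nat.card_eq_fintype_card, Fintype.card_fin]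
    have hD0 : (∏ M ∈ s, M.index) ≠ 0 :=
      Finset.prod_ne_zero_iff.mpr fun M hM => (hidx_prime M hM).ne_zero
    have hcount : ∀ i, n i ≤ (s.filter (fun M => M.index = q i)).card := by
      intro i
      have hdvd_i : (q i) ^ (n i) ∣ ∏ M ∈ s, M.index := by
        refine dvd_trans ?_ (hq2 ▸ h1)
        exact Finset.dvd_prod_of_mem _ (Finset.mem_univ i)
      have h3 := (Nat.Prime.pow_dvd_iff_le_factorization (hq i)
        hD0).mp hdvd_i
      refine h3.trans (le_of_eq ?_)
      rw [Nat.factorization_prod (fun M hM => (hidx_prime M hM).ne_zero)]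
      rw [Finset.sum_apply']
      rw [Finset.card_filter]
      apply Finset.sum_congr rfl
      intro M hM
      rw [(hidx_prime M hM).factorization, Finsupp.single_apply]
    have hsum : ∑ i, (s.filter (fun M => M.index = q i)).card ≤ s.card := by
      rw [← Finset.card_biUnion]
      · exact Finset.card_le_card (Finset.biUnion_subset.mpr fun i _ =>
          Finset.filter_subset _ s)
      · intro i _ j _ hij
        simp only [Finset.disjoint_left, Finset.mem_filter]
        rintro M ⟨-, hM1⟩ ⟨-, hM2⟩
        exact hij (hqinj (hM1 ▸ hM2 ▸ rfl))
    calc ∑ i, n i ≤ ∑ i, (s.filter (fun M => M.index = q i)).card :=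
          Finset.sum_le_sum fun i _ => hcount i
      _ ≤ s.card := hsum
      _ = m := hcard
  -- conclusion
  unfold interNum
  exact le_antisymm (Nat.sInf_le hmem)
    (le_csInf ⟨_, hmem⟩ fun m hm => hlb m hm)

end Master

theorem interNum_nilpotent (G : Type*) [Group G] [Finite G] [Nontrivial G]
    (hG : Group.IsNilpotent G) (P : ∀ p : ℕ, Sylow p G) (r : ℕ → ℕ)
    (hrank : ∀ p ∈ (Nat.card G).primeFactors,
      Nonempty ((↥(P p : Subgroup G) ⧸ frattini ↥(P p : Subgroup G)) ≃*
        (Fin (r p) → Multiplicative (ZMod p)))) :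
    interNum G = ∑ p ∈ (Nat.card G).primeFactors, r p := by
  classical
  haveI := hG
  set ps := (Nat.card G).primeFactors with hps
  have hn : ∀ (p : ℕ) (_hp : Fact p.Prime) (Q : Sylow p G), (↑Q : Subgroup G).Normal :=
    ((isNilpotent_of_finite_tfae (G := G)).out 0 3).mp hG
  obtain ⟨e⟩ : Nonempty ((∀ p : ps, ∀ Q : Sylow p G, (↑Q : Subgroup G)) ≃* G) :=
    ((isNilpotent_of_finite_tfae (G := G)).out 0 4).mp hG
  set H : ps → Type _ := fun p => ∀ Q : Sylow (p : ℕ) G, ↥(Q : Subgroup G) with hH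
  have hfact : ∀ p : ps, Fact (p : ℕ).Prime := fun p =>
    ⟨Nat.prime_of_mem_primeFactors p.2⟩
  letI huniq : ∀ p : ps, Unique (Sylow (p : ℕ) G) := fun p =>
    haveI := hfact p
    Sylow.unique_of_normal (P p.1) (hn p.1 (hfact p) (P p.1))
  -- the isomorphism between each factor and the chosen Sylow subgroup
  have u : ∀ p : ps, H p ≃* ↥((P (p : ℕ) : Subgroup G)) := fun p =>
    (MulEquiv.piUnique (fun Q : Sylow (p : ℕ) G => ↥(Q : Subgroup G))).trans
      (MulEquiv.subgroupCongr
        (congrArg (fun Q : Sylow (p : ℕ) G => (Q : Subgroup G)) (Subsingleton.elim _ _)))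
  have w : ∀ p : ps, (↥(P (p : ℕ) : Subgroup G) ⧸ frattini ↥(P (p : ℕ) : Subgroup G)) ≃*
      (Fin (r (p : ℕ)) → Multiplicative (ZMod (p : ℕ))) := fun p =>
    (hrank p.1 p.2).some
  set fp : ∀ p : ps, H p →* (Fin (r (p : ℕ)) → Multiplicative (ZMod (p : ℕ))) :=
    fun p => (w p).toMonoidHom.comp
      ((QuotientGroup.mk' (frattini ↥(P (p : ℕ) : Subgroup G))).comp (u p).toMonoidHom)
    with hfp
  have hfsurj : ∀ p : ps, Function.Surjective (fp p) := fun p =>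
    (w p).surjective.comp ((QuotientGroup.mk'_surjective _).comp (u p).surjective)
  have hkerf : ∀ p : ps, (fp p).ker = frattini (H p) := by
    intro p
    have h1 : (fp p).ker = Subgroup.comap
        ((QuotientGroup.mk' (frattini ↥(P (p : ℕ) : Subgroup G))).comp (u p).toMonoidHom)
        (w p).toMonoidHom.ker := by
      rw [hfp]
      exact (MonoidHom.comap_ker _ _).symm
    rw [h1, (w p).toMonoidHom.ker_eq_bot_iff.mpr (w p).injective, MonoidHom.comap_bot,
      ← MonoidHom.comap_ker, QuotientGroup.ker_mk']
    exact (u p).comapSubgroup.map_radical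
  have hq : ∀ p : ps, (p : ℕ).Prime := fun p => (hfact p).out
  have hqinj : Function.Injective (fun p : ps => (p : ℕ)) := fun a b h => Subtype.ext h
  have hnil : Group.IsNilpotent (∀ p : ps, H p) :=
    nilpotent_of_mulEquiv e.symm
  have hmaster := aux_master (I := ps) (H := H) (q := fun p => (p : ℕ))
    (n := fun p => r (p : ℕ)) hq hqinj fp hfsurj hkerf hnil
  rw [aux_interNum_eq_of_mulEquiv e.symm, hmaster]
  exact Finset.sum_coe_sort ps r
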